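/- Let $B^* \subset \mathbb{R}^k$ be a bounded open set, $M > 1$, $R > 0$, and let $\Omega_m \in \mathscr{C}_{M,R}$ converge in the Hausdorff complementary distance to a nonempty open set $\Omega \subset B^*$. Then $\Omega$ is connected. -/

import Mathlib

open Metric Filter

/-- Property `(C_M)`. -/
def PropertyCM {k : ℕ} (M : ℝ) (Ω : Set (EuclideanSpace ℝ (Fin k))) : Prop :=
  ∀ x ∈ Ω, ∀ y ∈ Ω, ∃ K : Set (EuclideanSpace ℝ (Fin k)),
    IsCompact K ∧ IsConnected K ∧ x ∈ K ∧ y ∈ K ∧ K ⊆ Ω ∧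
    ∀ z ∈ K, ball z (min (infDist x (frontier Ω)) (infDist y (frontier Ω)) / M) ⊆ Ω

/-- The class `𝒞_{M,R}` of open subsets of `B*` containing a ball of radius `R`
and satisfying property `(C_M)`. -/
def ClassCMR {k : ℕ} (M R : ℝ) (Bstar Ω : Set (EuclideanSpace ℝ (Fin k))) : Prop :=
  IsOpen Ω ∧ Ω ⊆ Bstar ∧ (∃ xΩ, ball xΩ R ⊆ Ω) ∧ PropertyCM M Ω

theorem stmt10 {k : ℕ} (Bstar : Set (EuclideanSpace ℝ (Fin k)))
    (hBo : IsOpen Bstar) (hBb : Bornology.IsBounded Bstar)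
    (M R : ℝ) (hM : 1 < M) (hR : 0 < R)
    (Ωm : ℕ → Set (EuclideanSpace ℝ (Fin k)))
    (hΩm : ∀ m, ClassCMR M R Bstar (Ωm m))
    (Ω : Set (EuclideanSpace ℝ (Fin k))) (hΩo : IsOpen Ω) (hΩB : Ω ⊆ Bstar)
    (hΩne : Ω.Nonempty)
    (hconv : Tendsto (fun m => hausdorffDist (closure Bstar \ Ωm m) (closure Bstar \ Ω))
      atTop (nhds 0)) :
    IsConnected Ω := by
  haveI : PreconnectedSpace (EuclideanSpace ℝ (Fin k)) :=
    ⟨(convex_univ : Convex ℝ (Set.univ : Set (EuclideanSpace ℝ (Fin k)))).isPreconnected⟩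
  have hM0 : (0:ℝ) < M := lt_trans one_pos hM
  set F : Set (EuclideanSpace ℝ (Fin k)) := closure Bstar \ Ω with hF
  have hBcb : Bornology.IsBounded (closure Bstar) := hBb.closure
  -- Case: complement empty
  by_cases hFne : F.Nonempty
  · -- space is nontrivial
    obtain ⟨f, hfB, hfΩ⟩ := hFne
    obtain ⟨a0, ha0⟩ := hΩne
    haveI : Nontrivial (EuclideanSpace ℝ (Fin k)) := ⟨⟨f, a0, fun h => hfΩ (h ▸ ha0)⟩⟩
    refine ⟨⟨a0, ha0⟩, ?_⟩
    intro u v hu hv huv ⟨a, haΩ, hau⟩ ⟨b, hbΩ, hbv⟩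
    -- balls around a and b inside Ω
    obtain ⟨ra, hra, hball_a⟩ := Metric.isOpen_iff.mp hΩo a haΩ
    obtain ⟨rb, hrb, hball_b⟩ := Metric.isOpen_iff.mp hΩo b hbΩ
    set r := min ra rb with hr
    have hr0 : 0 < r := lt_min hra hrb
    have hballa : ball a r ⊆ Ω := (ball_subset_ball (min_le_left _ _)).trans hball_a
    have hballb : ball b r ⊆ Ω := (ball_subset_ball (min_le_right _ _)).trans hball_b
    -- infDist to F is at least r
    have hFne' : F.Nonempty := ⟨f, hfB, hfΩ⟩
    have key : ∀ x : EuclideanSpace ℝ (Fin k), ball x r ⊆ Ω → r ≤ infDist x F := by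
      intro x hx
      refine le_of_not_gt fun hlt => ?_
      obtain ⟨y, hyF, hy⟩ := (infDist_lt_iff hFne').mp hlt
      exact hyF.2 (hx (by rwa [mem_ball, dist_comm]))
    have hinfa : r ≤ infDist a F := key a hballa
    have hinfb : r ≤ infDist b F := key b hballb
    set δ := r / (4 * M) with hδ
    have hδ0 : 0 < δ := div_pos hr0 (by linarith)
    -- choose m with hausdorffDist < δ
    have hev := (Metric.tendsto_nhds.mp hconv) δ hδ0
    obtain ⟨m, hm⟩ := hev.exists
    rw [Real.dist_eq, sub_zero, abs_of_nonneg hausdorffDist_nonneg] at hm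
    set Fm : Set (EuclideanSpace ℝ (Fin k)) := closure Bstar \ Ωm m with hFm
    obtain ⟨hΩmo, hΩmB, _, hΩmCM⟩ := hΩm m
    have hΩmcb : Ωm m ⊆ closure Bstar := hΩmB.trans subset_closure
    -- Fm is nonempty
    have hFmne : Fm.Nonempty := by
      by_contra h
      rw [Set.not_nonempty_iff_eq_empty, Set.diff_eq_empty] at h
      have heq : Ωm m = closure Bstar := Set.Subset.antisymm hΩmcb h
      have hclopen : IsClopen (Ωm m) := ⟨heq ▸ isClosed_closure, hΩmo⟩
      have huniv : Ωm m = Set.univ :=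
        hclopen.eq_univ ⟨a0, by rw [heq]; exact subset_closure (hΩB ha0)⟩
      exact NormedSpace.unbounded_univ ℝ _ (huniv ▸ (hBb.subset hΩmB : Bornology.IsBounded (Ωm m)))
    have hedist : EMetric.hausdorffEdist Fm F ≠ ⊤ :=
      hausdorffEdist_ne_top_of_nonempty_of_bounded hFmne hFne'
        (hBcb.subset Set.diff_subset) (hBcb.subset Set.diff_subset)
    -- infDist a Fm ≥ r - δ
    have hlow : ∀ x : EuclideanSpace ℝ (Fin k), r ≤ infDist x F → r - δ ≤ infDist x Fm := by
      intro x hx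
      have := infDist_le_infDist_add_hausdorffDist (x := x) (s := Fm) (t := F) hedist
      linarith
    have hinfam : r - δ ≤ infDist a Fm := hlow a hinfa
    have hinfbm : r - δ ≤ infDist b Fm := hlow b hinfb
    have hrδ : δ < r := by
      rw [hδ, div_lt_iff₀ (by linarith : (0:ℝ) < 4 * M)]
      nlinarith
    -- a, b ∈ Ωm m
    have hmema : ∀ x : EuclideanSpace ℝ (Fin k), x ∈ Ω → r - δ ≤ infDist x Fm → x ∈ Ωm m := by
      intro x hxΩ hxd
      by_contra hx
      have : x ∈ Fm := ⟨subset_closure (hΩB hxΩ), hx⟩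
      rw [infDist_zero_of_mem this] at hxd
      linarith
    have ham : a ∈ Ωm m := hmema a haΩ hinfam
    have hbm : b ∈ Ωm m := hmema b hbΩ hinfbm
    -- frontier Ωm m ⊆ Fm, and distance to frontier is at least distance to Fm
    have hfro : frontier (Ωm m) ⊆ Fm := by
      intro z hz
      have hz1 : z ∈ closure (Ωm m) := hz.1
      have hz2 : z ∉ Ωm m := by
        simpa [hΩmo.interior_eq] using hz.2
      have hz3 : z ∈ closure Bstar := by
        have := closure_mono hΩmcb hz1
        rwa [closure_closure] at this
      exact ⟨hz3, hz2⟩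
    have hfrone : (frontier (Ωm m)).Nonempty := by
      by_contra h
      rw [Set.not_nonempty_iff_eq_empty] at h
      have hclopen : IsClopen (Ωm m) := isClopen_iff_frontier_eq_empty.mpr h
      have huniv : Ωm m = Set.univ := hclopen.eq_univ ⟨a, ham⟩
      exact NormedSpace.unbounded_univ ℝ _ (huniv ▸ (hBb.subset hΩmB : Bornology.IsBounded (Ωm m)))
    have hfra : r - δ ≤ infDist a (frontier (Ωm m)) :=
      hinfam.trans (infDist_le_infDist_of_subset hfro hfrone)
    have hfrb : r - δ ≤ infDist b (frontier (Ωm m)) :=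
      hinfbm.trans (infDist_le_infDist_of_subset hfro hfrone)
    -- apply property (C_M)
    obtain ⟨K, hKc, hKconn, haK, hbK, hKΩm, hKball⟩ := hΩmCM a ham b hbm
    set d := min (infDist a (frontier (Ωm m))) (infDist b (frontier (Ωm m))) with hd
    have hdlb : r - δ ≤ d := le_min hfra hfrb
    -- every point of K is in Ω
    have hKΩ : K ⊆ Ω := by
      intro z hzK
      have hzm : z ∈ Ωm m := hKΩm hzK
      have hball := hKball z hzK
      have h1 : d / M ≤ infDist z Fm := by
        refine le_of_not_gt fun hlt => ?_
        obtain ⟨y, hyFm, hy⟩ := (infDist_lt_iff hFmne).mp hlt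
        exact hyFm.2 (hball (by rwa [mem_ball, dist_comm]))
      have h2 : infDist z Fm ≤ infDist z F + hausdorffDist F Fm :=
        infDist_le_infDist_add_hausdorffDist (by rw [EMetric.hausdorffEdist_comm]; exact hedist)
      rw [hausdorffDist_comm] at h2
      have h3 : d / M - δ ≤ infDist z F := by linarith
      have hpos : 0 < infDist z F := by
        have hdM : (r - δ) / M ≤ d / M := by gcongr
        have hδM : δ * M = r / 4 := by
          rw [hδ]; field_simp
        have hlt : δ < (r - δ) / M := by
          rw [lt_div_iff₀ hM0]
          nlinarith [mul_pos hδ0 (by linarith : (0:ℝ) < M - 1)]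
        linarith
      by_contra hzΩ
      have : z ∈ F := ⟨subset_closure (hΩmB hzm), hzΩ⟩
      rw [infDist_zero_of_mem this] at hpos
      exact lt_irrefl _ hpos
    -- K is preconnected, contained in u ∪ v, meets both
    obtain ⟨w, hw⟩ := hKconn.isPreconnected u v hu hv (hKΩ.trans huv) ⟨a, haK, hau⟩ ⟨b, hbK, hbv⟩
    exact ⟨w, hKΩ hw.1, hw.2⟩
  · -- complement is empty: Ω = closure Bstar is clopen, hence the whole space
    rw [Set.not_nonempty_iff_eq_empty, Set.diff_eq_empty] at hFne
    have heq : Ω = closure Bstar :=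
      Set.Subset.antisymm (hΩB.trans subset_closure) hFne
    have hclopen : IsClopen Ω := ⟨heq ▸ isClosed_closure, hΩo⟩
    have huniv : Ω = Set.univ := hclopen.eq_univ hΩne
    rw [huniv]
    exact ⟨⟨hΩne.some, trivial⟩, (convex_univ : Convex ℝ _).isPreconnected⟩
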